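/- Let $N \ge 1$, $\tilde{G} \in \mathbb{R}^{N \times N}$, $\gamma \ge 0$, $\varepsilon > 0$, and let $P \in \mathbb{R}^{N \times N}$ be symmetric positive definite satisfying the algebraic Riccati equation $\tilde{G}^\top P + P \tilde{G} + \gamma^2 P P + (1 + \varepsilon)\mathbf{I}_N = 0$. Let $\mu > 0$ be such that $\langle x, Px \rangle \le \mu \|x\|^2$ for all $x \in \mathbb{R}^N$. Let $e : [0, \infty) \to \mathbb{R}^N$ be differentiable and $d : [0,\infty) \to \mathbb{R}^N$ be such that $\dot{e}(t) = \tilde{G} e(t) + d(t)$ and $\|d(t)\| \le \gamma \|e(t)\|$ for all $t \ge 0$. Then for all $t \ge 0$, $\langle e(t), P e(t) \rangle \le \langle e(0), P e(0) \rangle \, e^{-(\varepsilon/\mu) t}$. -/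

import Mathlib

open Matrix

section aux

variable {N : ℕ}

lemma toEuclideanLin_mul_apply' (A B : Matrix (Fin N) (Fin N) ℝ)
    (x : EuclideanSpace ℝ (Fin N)) :
    Matrix.toEuclideanLin (A * B) x
      = Matrix.toEuclideanLin A (Matrix.toEuclideanLin B x) := by
  simp [Matrix.toEuclideanLin_apply, Matrix.mulVec_mulVec]

lemma transpose_inner' (A : Matrix (Fin N) (Fin N) ℝ)
    (x y : EuclideanSpace ℝ (Fin N)) :
    (inner ℝ x (Matrix.toEuclideanLin Aᵀ y) : ℝ)
      = inner ℝ (Matrix.toEuclideanLin A x) y := by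
  have h : Aᵀ = Aᴴ := by
    ext i j; simp [Matrix.conjTranspose_apply]
  rw [h, Matrix.toEuclideanLin_conjTranspose_eq_adjoint]
  exact LinearMap.adjoint_inner_right _ _ _

end aux

/-- Quantitative (exponential) convergence of the observer error: under the
Riccati equation and the Lipschitz bound, the Lyapunov quantity
`⟨e(t), P e(t)⟩` decays at rate `ε/μ`, where `μ` bounds `P` from above. -/
theorem stmt10 (N : ℕ) (hN : 1 ≤ N) (Gt : Matrix (Fin N) (Fin N) ℝ)
    (γ : ℝ) (hγ : 0 ≤ γ) (ε : ℝ) (hε : 0 < ε)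
    (P : Matrix (Fin N) (Fin N) ℝ) (hP : P.PosDef)
    (hric : Gtᵀ * P + P * Gt + γ ^ 2 • (P * P)
        + (1 + ε) • (1 : Matrix (Fin N) (Fin N) ℝ) = 0)
    (μ : ℝ) (hμ : 0 < μ)
    (hPμ : ∀ x : EuclideanSpace ℝ (Fin N),
      (inner ℝ x (Matrix.toEuclideanLin P x) : ℝ) ≤ μ * ‖x‖ ^ 2)
    (e d : ℝ → EuclideanSpace ℝ (Fin N))
    (hde : ∀ t : ℝ, 0 ≤ t →
      HasDerivAt e (Matrix.toEuclideanLin Gt (e t) + d t) t)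
    (hd : ∀ t : ℝ, 0 ≤ t → ‖d t‖ ≤ γ * ‖e t‖) :
    ∀ t : ℝ, 0 ≤ t →
      (inner ℝ (e t) (Matrix.toEuclideanLin P (e t)) : ℝ)
        ≤ (inner ℝ (e 0) (Matrix.toEuclideanLin P (e 0)) : ℝ)
            * Real.exp (-(ε / μ) * t) := by
  set L : EuclideanSpace ℝ (Fin N) →ₗ[ℝ] EuclideanSpace ℝ (Fin N) :=
    Matrix.toEuclideanLin P with hL
  set G : EuclideanSpace ℝ (Fin N) →ₗ[ℝ] EuclideanSpace ℝ (Fin N) :=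
    Matrix.toEuclideanLin Gt with hG
  have hsymm : ∀ x y : EuclideanSpace ℝ (Fin N),
      (inner ℝ (L x) y : ℝ) = inner ℝ x (L y) :=
    (Matrix.isHermitian_iff_isSymmetric.mp hP.isHermitian)
  -- key pointwise identity from the Riccati equation
  have key : ∀ x : EuclideanSpace ℝ (Fin N),
      2 * (inner ℝ (G x) (L x) : ℝ) + γ ^ 2 * ‖L x‖ ^ 2 + (1 + ε) * ‖x‖ ^ 2 = 0 := by
    intro x
    have h0 : (inner ℝ x (Matrix.toEuclideanLin
        (Gtᵀ * P + P * Gt + γ ^ 2 • (P * P)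
          + (1 + ε) • (1 : Matrix (Fin N) (Fin N) ℝ)) x) : ℝ) = 0 := by
      rw [hric]; simp
    rw [map_add, map_add, map_add, LinearMap.add_apply, LinearMap.add_apply,
      LinearMap.add_apply, inner_add_right, inner_add_right, inner_add_right] at h0
    have h1 : (inner ℝ x (Matrix.toEuclideanLin (Gtᵀ * P) x) : ℝ)
        = inner ℝ (G x) (L x) := by
      rw [toEuclideanLin_mul_apply', transpose_inner']
    have h2 : (inner ℝ x (Matrix.toEuclideanLin (P * Gt) x) : ℝ)
        = inner ℝ (G x) (L x) := by
      rw [toEuclideanLin_mul_apply', ← hsymm, real_inner_comm]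
    have h3 : (inner ℝ x (Matrix.toEuclideanLin (γ ^ 2 • (P * P)) x) : ℝ)
        = γ ^ 2 * ‖L x‖ ^ 2 := by
      rw [_root_.map_smul, LinearMap.smul_apply, inner_smul_right, toEuclideanLin_mul_apply']
      rw [← hsymm, real_inner_self_eq_norm_sq]
    have h4 : (inner ℝ x (Matrix.toEuclideanLin
        ((1 + ε) • (1 : Matrix (Fin N) (Fin N) ℝ)) x) : ℝ) = (1 + ε) * ‖x‖ ^ 2 := by
      rw [_root_.map_smul, LinearMap.smul_apply, inner_smul_right]
      have : Matrix.toEuclideanLin (1 : Matrix (Fin N) (Fin N) ℝ) x = x := by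
        simp [Matrix.toEuclideanLin_apply]
      rw [this, real_inner_self_eq_norm_sq]
    rw [h1, h2, h3, h4] at h0
    linarith
  -- the Lyapunov function and its derivative
  set W : ℝ → ℝ := fun t => (inner ℝ (e t) (L (e t)) : ℝ) with hW
  have hLc : Continuous L := LinearMap.continuous_of_finiteDimensional L
  have hWderiv : ∀ t : ℝ, 0 ≤ t →
      HasDerivAt W (2 * (inner ℝ (G (e t) + d t) (L (e t)) : ℝ)) t := by
    intro t ht
    have hLe : HasDerivAt (fun s => L (e s)) (L (G (e t) + d t)) t := by
      exact (L.toContinuousLinearMap).hasFDerivAt.comp_hasDerivAt t (hde t ht)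
    have := (hde t ht).inner ℝ hLe
    refine this.congr_deriv ?_
    have : (inner ℝ (e t) (L (G (e t) + d t)) : ℝ)
        = inner ℝ (G (e t) + d t) (L (e t)) := by
      rw [← hsymm, real_inner_comm]
    rw [this]; ring
  -- derivative bound
  have hWbound : ∀ t : ℝ, 0 < t →
      2 * (inner ℝ (G (e t) + d t) (L (e t)) : ℝ) + (ε / μ) * W t ≤ 0 := by
    intro t ht
    have ht' := le_of_lt ht
    have hk := key (e t)
    have hcs : (inner ℝ (d t) (L (e t)) : ℝ) ≤ γ * ‖e t‖ * ‖L (e t)‖ := by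
      calc (inner ℝ (d t) (L (e t)) : ℝ) ≤ ‖d t‖ * ‖L (e t)‖ :=
            real_inner_le_norm _ _
        _ ≤ γ * ‖e t‖ * ‖L (e t)‖ :=
            mul_le_mul_of_nonneg_right (hd t ht') (norm_nonneg _)
    have hamgm : 2 * (γ * ‖e t‖ * ‖L (e t)‖) ≤ ‖e t‖ ^ 2 + γ ^ 2 * ‖L (e t)‖ ^ 2 := by
      nlinarith [sq_nonneg (‖e t‖ - γ * ‖L (e t)‖)]
    have hWle : W t ≤ μ * ‖e t‖ ^ 2 := hPμ (e t)
    have hεμ : 0 < ε / μ := div_pos hε hμ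
    have hmul : (ε / μ) * W t ≤ ε * ‖e t‖ ^ 2 := by
      have := mul_le_mul_of_nonneg_left hWle (le_of_lt hεμ)
      calc (ε / μ) * W t ≤ (ε / μ) * (μ * ‖e t‖ ^ 2) := this
        _ = ε * ‖e t‖ ^ 2 := by field_simp
    have hexp : (inner ℝ (G (e t) + d t) (L (e t)) : ℝ)
        = inner ℝ (G (e t)) (L (e t)) + inner ℝ (d t) (L (e t)) := inner_add_left _ _ _
    rw [hexp]
    nlinarith
  -- Gronwall via monotonicity of g t = W t * exp ((ε/μ) t)
  set c : ℝ := ε / μ with hc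
  set g : ℝ → ℝ := fun t => W t * Real.exp (c * t) with hg
  have hgderiv : ∀ t : ℝ, 0 ≤ t →
      HasDerivAt g ((2 * (inner ℝ (G (e t) + d t) (L (e t)) : ℝ) + c * W t)
        * Real.exp (c * t)) t := by
    intro t ht
    have h1 := (hWderiv t ht).mul
      (((hasDerivAt_id t).const_mul c).exp)
    simp only [id_eq] at h1
    refine h1.congr_deriv ?_
    ring
  have hganti : AntitoneOn g (Set.Ici (0 : ℝ)) := by
    apply antitoneOn_of_deriv_nonpos (convex_Ici 0)
    · intro t ht
      exact ((hgderiv t ht).continuousAt).continuousWithinAt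
    · intro t ht
      rw [interior_Ici] at ht
      exact (hgderiv t (le_of_lt ht)).differentiableAt.differentiableWithinAt
    · intro t ht
      rw [interior_Ici] at ht
      rw [(hgderiv t (le_of_lt ht)).deriv]
      have := hWbound t ht
      have hexp : (0 : ℝ) < Real.exp (c * t) := Real.exp_pos _
      nlinarith
  intro t ht
  have := hganti (Set.self_mem_Ici) ht ht
  -- g t ≤ g 0 = W 0
  have hg0 : g 0 = W 0 := by simp [hg]
  have hgt : W t * Real.exp (c * t) ≤ W 0 := by
    rw [← hg0]; exact this
  have hexp : (0 : ℝ) < Real.exp (c * t) := Real.exp_pos _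
  have : W t ≤ W 0 * Real.exp (-(c) * t) := by
    rw [neg_mul, Real.exp_neg]
    rw [← le_div_iff₀ hexp] at hgt
    calc W t ≤ W 0 / Real.exp (c * t) := hgt
      _ = W 0 * (Real.exp (c * t))⁻¹ := div_eq_mul_inv _ _
  exact this
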